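/- Let f : ℝ → ℝ be 5 times continuously differentiable (ContDiff ℝ 5) and fix x ∈ ℝ. Define for h ≠ 0 the sliding cell average A_h(a) = (1/h)·∫_{x+a-h/2}^{x+a+h/2} f(t) dt. Then the reconstruction error h ↦ (3/640)·A_h(-2h) - (29/480)·A_h(-h) + (1067/960)·A_h(0) - (29/480)·A_h(h) + (3/640)·A_h(2h) - f(x) is O(h⁵) as h → 0 along nonzero h (i.e., IsBigO with respect to the punctured neighborhood filter 𝓝[≠] 0 of the function h ↦ h⁵). -/

import Mathlib

open Asymptotics

lemma mvt_step {g : ℝ → ℝ} {n : ℕ} (hd : Differentiable ℝ g) (h0 : g 0 = 0)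
    (hO : deriv g =O[nhds 0] fun h : ℝ => h ^ n) :
    g =O[nhds 0] fun h : ℝ => h ^ (n + 1) := by
  rw [isBigO_iff] at hO
  obtain ⟨C, hC⟩ := hO
  rw [Metric.eventually_nhds_iff] at hC
  obtain ⟨ε, hε, hball⟩ := hC
  rw [isBigO_iff]
  refine ⟨|C|, ?_⟩
  rw [Metric.eventually_nhds_iff]
  refine ⟨ε, hε, fun h hh => ?_⟩
  have hset : Convex ℝ (Set.uIcc (0:ℝ) h) := convex_uIcc _ _
  have hmem : ∀ t ∈ Set.uIcc (0:ℝ) h, |t| ≤ |h| := by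
    intro t ht
    rw [Set.uIcc_eq_union] at ht
    rcases ht with ht | ht
    · rcases Set.mem_Icc.mp ht with ⟨h1, h2⟩
      rw [abs_of_nonneg h1, abs_of_nonneg (le_trans h1 h2)]; exact h2
    · rcases Set.mem_Icc.mp ht with ⟨h1, h2⟩
      rw [abs_of_nonpos h2, abs_of_nonpos (le_trans h1 h2)]; exact neg_le_neg h1
  have bound : ∀ t ∈ Set.uIcc (0:ℝ) h, ‖deriv g t‖ ≤ |C| * |h| ^ n := by
    intro t ht
    have h1 : ‖deriv g t‖ ≤ C * ‖t ^ n‖ := by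
      apply hball
      simp only [Real.dist_eq, sub_zero] at hh ⊢
      exact lt_of_le_of_lt (hmem t ht) hh
    calc ‖deriv g t‖ ≤ C * ‖t ^ n‖ := h1
      _ ≤ |C| * |t| ^ n := by
          rw [Real.norm_eq_abs, abs_pow]
          exact mul_le_mul_of_nonneg_right (le_abs_self C) (by positivity)
      _ ≤ |C| * |h| ^ n := by
          exact mul_le_mul_of_nonneg_left (pow_le_pow_left₀ (abs_nonneg t) (hmem t ht) n) (abs_nonneg C)
  have := hset.norm_image_sub_le_of_norm_deriv_le (fun t _ => hd t)
    bound Set.left_mem_uIcc Set.right_mem_uIcc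
  rw [h0, sub_zero, sub_zero] at this
  calc ‖g h‖ ≤ |C| * |h| ^ n * ‖h‖ := this
    _ = |C| * ‖h ^ (n+1)‖ := by
        rw [Real.norm_eq_abs, Real.norm_eq_abs, abs_pow, pow_succ]; ring

/-- Weighted six-node combination used in WCNS flux reconstruction. -/
noncomputable def comb (x a1 a2 a3 a4 a5 a6 : ℝ) (ψ : ℝ → ℝ) : ℝ → ℝ := fun h =>
  a1 * ψ (x + (5/2) * h) - a2 * ψ (x + (3/2) * h) + a3 * ψ (x + (1/2) * h)
    - a4 * ψ (x + (-(1:ℝ)/2) * h) + a5 * ψ (x + (-(3:ℝ)/2) * h) - a6 * ψ (x + (-(5:ℝ)/2) * h)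

lemma node_hasDerivAt {ψ ψ' : ℝ → ℝ} (hψ : ∀ y, HasDerivAt ψ (ψ' y) y) (x c h : ℝ) :
    HasDerivAt (fun h => ψ (x + c * h)) (c * ψ' (x + c * h)) h := by
  have h1 : HasDerivAt (fun h : ℝ => x + c * h) c h := by
    simpa using ((hasDerivAt_id h).const_mul c).const_add x
  have := (hψ (x + c * h)).comp h h1
  have e : c * ψ' (x + c * h) = ψ' (x + c * h) * c := mul_comm _ _
  rw [e]; exact this

lemma comb_hasDerivAt {ψ ψ' : ℝ → ℝ} (hψ : ∀ y, HasDerivAt ψ (ψ' y) y)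
    (x a1 a2 a3 a4 a5 a6 h : ℝ) :
    HasDerivAt (comb x a1 a2 a3 a4 a5 a6 ψ)
      (comb x (a1 * (5/2)) (a2 * (3/2)) (a3 * (1/2)) (a4 * (-(1:ℝ)/2)) (a5 * (-(3:ℝ)/2))
        (a6 * (-(5:ℝ)/2)) ψ' h) h := by
  have H := (((((((node_hasDerivAt hψ x (5/2) h).const_mul a1).sub
    ((node_hasDerivAt hψ x (3/2) h).const_mul a2)).add
    ((node_hasDerivAt hψ x (1/2) h).const_mul a3)).sub
    ((node_hasDerivAt hψ x (-(1:ℝ)/2) h).const_mul a4)).add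
    ((node_hasDerivAt hψ x (-(3:ℝ)/2) h).const_mul a5)).sub
    ((node_hasDerivAt hψ x (-(5:ℝ)/2) h).const_mul a6))
  convert H using 1
  · rfl
  · rfl
  · funext y; simp [comb]
  simp [comb]; ring

lemma comb_chain {ψ ψ' : ℝ → ℝ} (hψ : ∀ y, HasDerivAt ψ (ψ' y) y)
    (x a1 a2 a3 a4 a5 a6 : ℝ) (n : ℕ)
    (h0 : a1 - a2 + a3 - a4 + a5 - a6 = 0)
    (hO : comb x (a1 * (5/2)) (a2 * (3/2)) (a3 * (1/2)) (a4 * (-(1:ℝ)/2)) (a5 * (-(3:ℝ)/2))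
        (a6 * (-(5:ℝ)/2)) ψ' =O[nhds 0] fun h : ℝ => h ^ n) :
    comb x a1 a2 a3 a4 a5 a6 ψ =O[nhds 0] fun h : ℝ => h ^ (n + 1) := by
  apply mvt_step (fun h => (comb_hasDerivAt hψ x a1 a2 a3 a4 a5 a6 h).differentiableAt)
  · simp only [comb, mul_zero, add_zero]
    linear_combination (ψ x) * h0
  · have e : deriv (comb x a1 a2 a3 a4 a5 a6 ψ)
        = comb x (a1 * (5/2)) (a2 * (3/2)) (a3 * (1/2)) (a4 * (-(1:ℝ)/2)) (a5 * (-(3:ℝ)/2))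
          (a6 * (-(5:ℝ)/2)) ψ' := funext fun h => (comb_hasDerivAt hψ x a1 a2 a3 a4 a5 a6 h).deriv
    rw [e]; exact hO

theorem flux_reconstruction_fifth_order
    (f : ℝ → ℝ) (hf : ContDiff ℝ 5 f) (x : ℝ) :
    (fun h : ℝ =>
        (let A : ℝ → ℝ := fun a => (1 / h) * ∫ t in (x + a - h / 2)..(x + a + h / 2), f t
         (3/640) * A (-2 * h) - (29/480) * A (-h) + (1067/960) * A 0
           - (29/480) * A h + (3/640) * A (2 * h)) - f x)
      =O[nhdsWithin 0 {0}ᶜ] fun h : ℝ => h ^ 5 := by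
  have hfc : Continuous f := hf.continuous
  set F : ℝ → ℝ := fun y => ∫ t in (0:ℝ)..y, f t with hFdef
  have hFd : ∀ y, HasDerivAt F (f y) y := fun y => (hfc.integral_hasStrictDerivAt 0 y).hasDerivAt
  set φ : ℕ → ℝ → ℝ := fun j => iteratedDeriv j f with hφdef
  have hfd : ∀ y, HasDerivAt f (φ 1 y) y := by
    intro y
    have hd : DifferentiableAt ℝ f y := (hf.differentiable (by norm_num)).differentiableAt
    have : φ 1 y = deriv f y := by rw [hφdef]; simp [iteratedDeriv_one]
    rw [this]; exact hd.hasDerivAt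
  have hφd : ∀ j, j < 5 → ∀ y, HasDerivAt (φ j) (φ (j+1) y) y := by
    intro j hj y
    have hd : DifferentiableAt ℝ (iteratedDeriv j f) y :=
      (hf.differentiable_iteratedDeriv j (by exact_mod_cast hj)) y
    have : φ (j+1) y = deriv (φ j) y := by rw [hφdef]; simp [iteratedDeriv_succ]
    rw [this]; exact hd.hasDerivAt
  have hφ5c : Continuous (φ 5) := hf.continuous_iteratedDeriv 5 le_rfl
  -- the chain from level 2 up to level 5
  have L2 : comb x ((3:ℝ)/640 * (5/2) * (5/2)) ((25:ℝ)/384 * (3/2) * (3/2))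
      ((75:ℝ)/64 * (1/2) * (1/2)) ((75:ℝ)/64 * (-(1:ℝ)/2) * (-(1:ℝ)/2))
      ((25:ℝ)/384 * (-(3:ℝ)/2) * (-(3:ℝ)/2)) ((3:ℝ)/640 * (-(5:ℝ)/2) * (-(5:ℝ)/2)) (φ 1)
      =O[nhds 0] fun h : ℝ => h ^ 4 := by
    apply comb_chain (hφd 1 (by norm_num)) _ _ _ _ _ _ _ 3 (by norm_num)
    apply comb_chain (hφd 2 (by norm_num)) _ _ _ _ _ _ _ 2 (by norm_num)
    apply comb_chain (hφd 3 (by norm_num)) _ _ _ _ _ _ _ 1 (by norm_num)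
    apply comb_chain (hφd 4 (by norm_num)) _ _ _ _ _ _ _ 0 (by norm_num)
    have hc : Continuous (comb x ((3:ℝ)/640 * (5/2) * (5/2) * (5/2) * (5/2) * (5/2) * (5/2))
        ((25:ℝ)/384 * (3/2) * (3/2) * (3/2) * (3/2) * (3/2) * (3/2))
        ((75:ℝ)/64 * (1/2) * (1/2) * (1/2) * (1/2) * (1/2) * (1/2))
        ((75:ℝ)/64 * (-(1:ℝ)/2) * (-(1:ℝ)/2) * (-(1:ℝ)/2) * (-(1:ℝ)/2) * (-(1:ℝ)/2) * (-(1:ℝ)/2))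
        ((25:ℝ)/384 * (-(3:ℝ)/2) * (-(3:ℝ)/2) * (-(3:ℝ)/2) * (-(3:ℝ)/2) * (-(3:ℝ)/2) * (-(3:ℝ)/2))
        ((3:ℝ)/640 * (-(5:ℝ)/2) * (-(5:ℝ)/2) * (-(5:ℝ)/2) * (-(5:ℝ)/2) * (-(5:ℝ)/2) * (-(5:ℝ)/2)) (φ 5)) := by
      unfold comb; fun_prop
    simpa using (hc.tendsto 0).isBigO_one ℝ
  -- level 1 : subtract the constant f x
  have L1 : (fun h : ℝ => comb x ((3:ℝ)/640 * (5/2)) ((25:ℝ)/384 * (3/2)) ((75:ℝ)/64 * (1/2))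
      ((75:ℝ)/64 * (-(1:ℝ)/2)) ((25:ℝ)/384 * (-(3:ℝ)/2)) ((3:ℝ)/640 * (-(5:ℝ)/2)) f h - f x)
      =O[nhds 0] fun h : ℝ => h ^ 5 := by
    apply mvt_step (n := 4)
      (fun h => ((comb_hasDerivAt hfd x _ _ _ _ _ _ h).sub_const (f x)).differentiableAt)
    · simp only [comb, mul_zero, add_zero]; ring
    · have e : deriv (fun h : ℝ => comb x ((3:ℝ)/640 * (5/2)) ((25:ℝ)/384 * (3/2))
          ((75:ℝ)/64 * (1/2)) ((75:ℝ)/64 * (-(1:ℝ)/2)) ((25:ℝ)/384 * (-(3:ℝ)/2))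
          ((3:ℝ)/640 * (-(5:ℝ)/2)) f h - f x)
          = comb x ((3:ℝ)/640 * (5/2) * (5/2)) ((25:ℝ)/384 * (3/2) * (3/2))
            ((75:ℝ)/64 * (1/2) * (1/2)) ((75:ℝ)/64 * (-(1:ℝ)/2) * (-(1:ℝ)/2))
            ((25:ℝ)/384 * (-(3:ℝ)/2) * (-(3:ℝ)/2)) ((3:ℝ)/640 * (-(5:ℝ)/2) * (-(5:ℝ)/2)) (φ 1) :=
        funext fun h => ((comb_hasDerivAt hfd x _ _ _ _ _ _ h).sub_const (f x)).deriv
      rw [e]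
      exact L2
  set G : ℝ → ℝ := fun h => comb x ((3:ℝ)/640) ((25:ℝ)/384) ((75:ℝ)/64) ((75:ℝ)/64)
      ((25:ℝ)/384) ((3:ℝ)/640) F h - h * f x with hGdef
  have L0 : G =O[nhds 0] fun h : ℝ => h ^ 6 := by
    apply mvt_step (n := 5)
      (fun h => ((comb_hasDerivAt hFd x _ _ _ _ _ _ h).sub (hasDerivAt_mul_const (f x))).differentiableAt)
    · show G 0 = 0
      simp only [hGdef, comb, mul_zero, add_zero, zero_mul]; ring
    · have e : deriv G = fun h : ℝ => comb x ((3:ℝ)/640 * (5/2)) ((25:ℝ)/384 * (3/2))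
          ((75:ℝ)/64 * (1/2)) ((75:ℝ)/64 * (-(1:ℝ)/2)) ((25:ℝ)/384 * (-(3:ℝ)/2))
          ((3:ℝ)/640 * (-(5:ℝ)/2)) f h - f x :=
        funext fun h => ((comb_hasDerivAt hFd x _ _ _ _ _ _ h).sub (hasDerivAt_mul_const (f x))).deriv
      show deriv G =O[nhds 0] fun h : ℝ => h ^ 5
      rw [e]; exact L1
  have L0' := L0.mono (nhdsWithin_le_nhds (s := {(0:ℝ)}ᶜ))
  have hdiv : (fun h : ℝ => G h / h) =O[nhdsWithin 0 {0}ᶜ] fun h : ℝ => h ^ 5 := by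
    rw [isBigO_iff] at L0' ⊢
    obtain ⟨C, hC⟩ := L0'
    refine ⟨C, ?_⟩
    filter_upwards [hC, self_mem_nhdsWithin] with h hb hne
    have hne' : (h:ℝ) ≠ 0 := hne
    rw [norm_div, div_le_iff₀ (norm_pos_iff.mpr hne')]
    calc ‖G h‖ ≤ C * ‖h ^ 6‖ := hb
      _ = C * ‖h ^ 5‖ * ‖h‖ := by
          rw [norm_pow, norm_pow, pow_succ]; ring
  have heq : (fun h : ℝ =>
        (let A : ℝ → ℝ := fun a => (1 / h) * ∫ t in (x + a - h / 2)..(x + a + h / 2), f t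
         (3/640) * A (-2 * h) - (29/480) * A (-h) + (1067/960) * A 0
           - (29/480) * A h + (3/640) * A (2 * h)) - f x)
      =ᶠ[nhdsWithin 0 {0}ᶜ] fun h : ℝ => G h / h := by
    have hint : ∀ u v : ℝ, (∫ t in u..v, f t) = F v - F u := fun u v =>
      (intervalIntegral.integral_interval_sub_left (hfc.intervalIntegrable _ _)
        (hfc.intervalIntegrable _ _)).symm
    filter_upwards [self_mem_nhdsWithin] with h hne
    have hne' : (h:ℝ) ≠ 0 := hne
    simp only [hGdef, comb, hint]
    field_simp
    ring_nf
  exact (hdiv.congr' heq.symm (Filter.EventuallyEq.refl _ _))
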